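/- Let (Ω, 𝓕, P) be a standard Borel probability space and X₁, X₂, X₃ : Ω → Bool mutually independent random variables, with X₁ and X₂ each uniformly distributed on Bool and P(X₃ = true) = f for some f ∈ [0,1), and let Y = (X₁ XOR X₂) OR X₃. Then X₁ and Y are NOT conditionally independent given the σ-algebra generated by the pair (X₂, X₃). -/

import Mathlib

open MeasureTheory ProbabilityTheory

lemma aux_const {Ω β : Type*} {_ : MeasurableSpace β} [MeasurableSingletonClass β]
    {Z : Ω → β} {g : Ω → ℝ}
    (hg : Measurable[MeasurableSpace.comap Z inferInstance] g) {ω ω' : Ω}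
    (h : Z ω = Z ω') : g ω = g ω' := by
  obtain ⟨T, -, hT⟩ := hg (measurableSet_singleton (g ω'))
  have hω' : ω' ∈ Z ⁻¹' T := by rw [hT]; exact rfl
  have hω : ω ∈ Z ⁻¹' T := by simpa [Set.mem_preimage, h] using hω'
  rw [hT] at hω; exact hω

theorem xor_or_not_condIndep {Ω : Type*} [MeasurableSpace Ω] [StandardBorelSpace Ω]
    {P : Measure Ω} [IsProbabilityMeasure P] (X₁ X₂ X₃ : Ω → Bool)
    (hX₁ : Measurable X₁) (hX₂ : Measurable X₂) (hX₃ : Measurable X₃)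
    (hIndep : iIndepFun ![X₁, X₂, X₃] P)
    (hu₁ : P (X₁ ⁻¹' {true}) = 1/2) (hu₂ : P (X₂ ⁻¹' {true}) = 1/2)
    (f : ENNReal) (hf1 : f < 1) (hX₃f : P (X₃ ⁻¹' {true}) = f)
    (Y : Ω → Bool) (hY : Y = fun ω => (Bool.xor (X₁ ω) (X₂ ω)) || X₃ ω) :
    ¬ CondIndepFun (MeasurableSpace.comap (fun ω => (X₂ ω, X₃ ω)) inferInstance)
        ((hX₂.prodMk hX₃).comap_le) X₁ Y P := by
  intro hCI
  set Z : Ω → Bool × Bool := fun ω => (X₂ ω, X₃ ω) with hZ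
  have hm : MeasurableSpace.comap Z inferInstance ≤ ‹MeasurableSpace Ω› :=
    (hX₂.prodMk hX₃).comap_le
  have hYm : Measurable Y := by
    rw [hY]
    exact (measurable_of_countable fun p : Bool × Bool × Bool =>
      (Bool.xor p.1 p.2.1 || p.2.2)).comp (hX₁.prodMk (hX₂.prodMk hX₃))
  set A : Set Ω := X₁ ⁻¹' {true} with hA
  set B : Set Ω := Y ⁻¹' {true} with hB
  set E : Set Ω := Z ⁻¹' {(false, false)} with hE
  have hEm : MeasurableSet[MeasurableSpace.comap Z inferInstance] E := ⟨{(false, false)}, measurableSet_singleton _, rfl⟩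
  have hEmeas : MeasurableSet E := hm _ hEm
  have hAmeas : MeasurableSet A := hX₁ (measurableSet_singleton _)
  have hBmeas : MeasurableSet B := hYm (measurableSet_singleton _)
  -- measure computations via independence
  have hX₂f : P (X₂ ⁻¹' {false}) = 1/2 := by
    have : X₂ ⁻¹' {false} = (X₂ ⁻¹' {true})ᶜ := by
      ext ω; simp [Set.mem_preimage]
    rw [this, measure_compl (hX₂ (measurableSet_singleton _)) (measure_ne_top _ _), hu₂,
      measure_univ]
    norm_num
  have hX₃false : P (X₃ ⁻¹' {false}) = 1 - f := by
    have : X₃ ⁻¹' {false} = (X₃ ⁻¹' {true})ᶜ := by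
      ext ω; simp [Set.mem_preimage]
    rw [this, measure_compl (hX₃ (measurableSet_singleton _)) (measure_ne_top _ _), hX₃f,
      measure_univ]
  -- triple and pairwise intersections
  have hiInter : ∀ (s : Fin 3 → Set Bool), (∀ i, MeasurableSet (s i)) →
      P (X₁ ⁻¹' s 0 ∩ (X₂ ⁻¹' s 1 ∩ X₃ ⁻¹' s 2))
        = P (X₁ ⁻¹' s 0) * (P (X₂ ⁻¹' s 1) * P (X₃ ⁻¹' s 2)) := by
    intro s hs
    have := hIndep.meas_iInter (s := fun i => ![X₁, X₂, X₃] i ⁻¹' s i)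
      (fun i => ⟨s i, hs i, rfl⟩)
    have h2 : (⋂ i, ![X₁, X₂, X₃] i ⁻¹' s i)
        = X₁ ⁻¹' s 0 ∩ (X₂ ⁻¹' s 1 ∩ X₃ ⁻¹' s 2) := by
      ext ω
      simp [Set.mem_iInter, Fin.forall_fin_succ, Matrix.cons_val_zero, Matrix.cons_val_one]
    rw [h2] at this
    rw [this, Fin.prod_univ_three]
    simp [mul_assoc]
  have hEeq : E = X₂ ⁻¹' {false} ∩ X₃ ⁻¹' {false} := by
    ext ω; simp [hE, hZ, Prod.ext_iff]
  have hPE : P E = 1/2 * (1 - f) := by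
    have := hiInter ![Set.univ, {false}, {false}] (by intro i; fin_cases i <;> simp)
    simp only [Matrix.cons_val_zero, Matrix.cons_val_one, Matrix.head_cons, Set.preimage_univ,
      Set.univ_inter, measure_univ, one_mul] at this
    rw [hEeq]
    rw [show (![Set.univ, {false}, {false}] : Fin 3 → Set Bool) 2 = {false} from rfl] at this
    rw [this, hX₂f, hX₃false]
  have hPAE : P (A ∩ E) = 1/2 * (1/2 * (1 - f)) := by
    have := hiInter ![{true}, {false}, {false}] (by intro i; fin_cases i <;> simp)
    simp only [Matrix.cons_val_zero, Matrix.cons_val_one, Matrix.head_cons] at this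
    rw [hEeq, show A ∩ (X₂ ⁻¹' {false} ∩ X₃ ⁻¹' {false})
        = X₁ ⁻¹' {true} ∩ (X₂ ⁻¹' {false} ∩ X₃ ⁻¹' {false}) from rfl]
    rw [show (![({true} : Set Bool), {false}, {false}]) 2 = {false} from rfl] at this
    rw [this, hu₁, hX₂f, hX₃false]
  -- on E, Y = X₁
  have hYX : ∀ ω, ω ∈ E → Y ω = X₁ ω := by
    intro ω hω
    have hω' : Z ω = (false, false) := hω
    have h2 : X₂ ω = false := congrArg Prod.fst hω'
    have h3 : X₃ ω = false := congrArg Prod.snd hω'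
    rw [hY]; simp [h2, h3]
  have hEB : E ∩ B = E ∩ A := by
    ext ω
    constructor <;> rintro ⟨hω, h'⟩ <;> refine ⟨hω, ?_⟩ <;>
      simp only [hB, hA, Set.mem_preimage, Set.mem_singleton_iff] at h' ⊢
    · rw [← hYX ω hω]; exact h'
    · rw [hYX ω hω]; exact h'
  have hEAB : E ∩ (A ∩ B) = E ∩ A := by
    rw [Set.inter_comm A B, ← Set.inter_assoc, hEB, Set.inter_assoc, Set.inter_self]
  -- positivity
  have h1f : (1 : ENNReal) - f ≠ 0 := by
    simp only [ne_eq, tsub_eq_zero_iff_le, not_le]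
    exact hf1
  have h1ftop : (1 : ENNReal) - f ≠ ⊤ := by
    exact ne_top_of_le_ne_top ENNReal.one_ne_top tsub_le_self
  set eR : ℝ := (P E).toReal with heRdef
  set aR : ℝ := (P (A ∩ E)).toReal with haRdef
  have heRpos : 0 < eR := by
    rw [heRdef, hPE]
    apply ENNReal.toReal_pos
    · exact mul_ne_zero (by norm_num) h1f
    · exact ENNReal.mul_ne_top (by norm_num) h1ftop
  have haReR : aR = eR / 2 := by
    rw [haRdef, heRdef, hPAE, hPE, ENNReal.toReal_mul]
    norm_num
    ring
  -- E is nonempty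
  obtain ⟨ω₀, hω₀⟩ : E.Nonempty := by
    rw [Set.nonempty_iff_ne_empty]
    intro h
    rw [h, measure_empty] at hPE
    exact (mul_ne_zero (by norm_num : (1:ENNReal)/2 ≠ 0) h1f) hPE.symm
  -- conditional expectation computations
  have key : ∀ S : Set Ω, MeasurableSet S →
      ∫ x in E, (P⟦S | MeasurableSpace.comap Z inferInstance⟧) x ∂P = (P (E ∩ S)).toReal := by
    intro S hS
    rw [setIntegral_condExp hm ((integrable_const (1:ℝ)).indicator hS) hEm,
      setIntegral_indicator hS]
    simp
    rfl
  have hconstInt : ∀ g : Ω → ℝ, Measurable[MeasurableSpace.comap Z inferInstance] g →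
      ∫ x in E, g x ∂P = g ω₀ * eR := by
    intro g hg
    have hcongr : Set.EqOn g (fun _ => g ω₀) E := by
      intro x hx
      exact aux_const hg (show Z x = Z ω₀ by
        rw [show Z x = (false, false) from hx, show Z ω₀ = (false, false) from hω₀])
    rw [setIntegral_congr_fun hEmeas hcongr]
    simp [mul_comm]
    exact Or.inl rfl
  set c₁ : ℝ := (P⟦A | MeasurableSpace.comap Z inferInstance⟧) ω₀ with hc₁
  set c₂ : ℝ := (P⟦B | MeasurableSpace.comap Z inferInstance⟧) ω₀ with hc₂
  have hg₁ : Measurable[MeasurableSpace.comap Z inferInstance]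
      (P⟦A | MeasurableSpace.comap Z inferInstance⟧) := stronglyMeasurable_condExp.measurable
  have hg₂ : Measurable[MeasurableSpace.comap Z inferInstance]
      (P⟦B | MeasurableSpace.comap Z inferInstance⟧) := stronglyMeasurable_condExp.measurable
  have eq1 : c₁ * eR = aR := by
    rw [hc₁, ← hconstInt _ hg₁, key A hAmeas, Set.inter_comm]
  have eq2 : c₂ * eR = aR := by
    rw [hc₂, ← hconstInt _ hg₂, key B hBmeas, hEB, Set.inter_comm]
  have h := (condIndepFun_iff_condExp_inter_preimage_eq_mul hX₁ hYm).mp hCI {true} {true}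
    (measurableSet_singleton _) (measurableSet_singleton _)
  have eq3 : aR = c₁ * c₂ * eR := by
    have hL : ∫ x in E, (P⟦A ∩ B | MeasurableSpace.comap Z inferInstance⟧) x ∂P = aR := by
      rw [key (A ∩ B) (hAmeas.inter hBmeas), hEAB, Set.inter_comm]
    have hR : ∫ x in E, (P⟦A ∩ B | MeasurableSpace.comap Z inferInstance⟧) x ∂P
        = c₁ * c₂ * eR := by
      rw [setIntegral_congr_ae hEmeas (h.mono fun x hx _ => hx)]
      exact hconstInt _ (hg₁.mul hg₂)
    rw [← hL, hR]
  nlinarith [eq1, eq2, eq3, heRpos, haReR, sq_nonneg eR, sq_nonneg aR]
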